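/- (Extraction lemma.) Let F be a field and 0 < n ≤ p be integers. Let A ∈ Mat_{n,p}(F), and let K ∈ Mat_{n−1,p−1}(F) be the submatrix of A obtained by deleting the last row and last column. Let E_{n,p} ∈ Mat_{n,p}(F) be the matrix whose only nonzero entry is a 1 at position (n,p). If rank A < n and rank (A + E_{n,p}) < n, then rank K < n − 1. -/

import Mathlib

open Matrix

lemma rank_lt_iff' {F : Type*} [Field F] {a b : ℕ} (M : Matrix (Fin a) (Fin b) F) :
    M.rank < a ↔ ∃ u, u ≠ 0 ∧ u ᵥ* M = 0 := by
  rw [← Matrix.rank_transpose]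
  have hrn := LinearMap.finrank_range_add_finrank_ker (Mᵀ.mulVecLin)
  have hdom : Module.finrank F (Fin a → F) = a := by simp
  have hr : Mᵀ.rank = Module.finrank F (LinearMap.range Mᵀ.mulVecLin) := rfl
  have hker : LinearMap.ker Mᵀ.mulVecLin ≠ ⊥ ↔
      0 < Module.finrank F (LinearMap.ker Mᵀ.mulVecLin) := by
    rw [Nat.pos_iff_ne_zero, not_iff_not.symm, not_not, not_not,
      Submodule.finrank_eq_zero]
  constructor
  · intro h
    obtain ⟨u, hu, hu0⟩ := Submodule.exists_mem_ne_zero_of_ne_bot (hker.mpr (by omega))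
    exact ⟨u, hu0, by simpa [Matrix.mulVecLin_apply, Matrix.mulVec_transpose] using hu⟩
  · rintro ⟨u, hu0, hu⟩
    have hk : LinearMap.ker Mᵀ.mulVecLin ≠ ⊥ := by
      intro hk
      have : u ∈ LinearMap.ker Mᵀ.mulVecLin := by
        simp [Matrix.mulVecLin_apply, Matrix.mulVec_transpose, hu]
      rw [hk] at this
      exact hu0 (by simpa using this)
    have := hker.mp hk
    omega

lemma extraction_aux (F : Type*) [Field F] (m q : ℕ)
    (A : Matrix (Fin (m+1)) (Fin (q+1)) F)
    (hA : A.rank < m+1)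
    (hAE : (A + Matrix.single (Fin.last m) (Fin.last q) (1 : F)).rank < m+1) :
    (A.submatrix (Fin.castSucc) (Fin.castSucc)).rank < m := by
  set E := Matrix.single (Fin.last m) (Fin.last q) (1 : F) with hE
  obtain ⟨u, hu0, huA⟩ := (rank_lt_iff' A).mp hA
  obtain ⟨w, hw0, hwAE⟩ := (rank_lt_iff' _).mp hAE
  -- vecMul against E
  have hvE : ∀ (y : Fin (m+1) → F), y ᵥ* E =
      fun k => if k = Fin.last q then y (Fin.last m) else 0 := by
    intro y
    ext k
    simp only [Matrix.vecMul, dotProduct, hE, Matrix.single]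
    by_cases hk : k = Fin.last q
    · subst hk
      simp [Finset.sum_ite_eq']
    · simp [Ne.symm hk, hk]
  -- obtain the key vector x
  obtain ⟨x, hx0, hxl, hxA⟩ :
      ∃ x : Fin (m+1) → F, x ≠ 0 ∧ x (Fin.last m) = 0 ∧
        ∀ j : Fin (q+1), j ≠ Fin.last q → (x ᵥ* A) j = 0 := by
    by_cases hul : u (Fin.last m) = 0
    · exact ⟨u, hu0, hul, fun j _ => by rw [huA]; rfl⟩
    by_cases hwl : w (Fin.last m) = 0
    · refine ⟨w, hw0, hwl, fun j _ => ?_⟩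
      have : w ᵥ* A = w ᵥ* (A + E) - w ᵥ* E := by
        rw [Matrix.vecMul_add]; abel
      rw [this, hwAE, hvE]
      simp [hwl]
    · refine ⟨w (Fin.last m) • u - u (Fin.last m) • w, ?_, ?_, ?_⟩
      · intro h
        have hwA : w ᵥ* A = - (w ᵥ* E) := by
          have : w ᵥ* A = w ᵥ* (A + E) - w ᵥ* E := by
            rw [Matrix.vecMul_add]; abel
          rw [this, hwAE]; abel
        have hcalc : (w (Fin.last m) • u - u (Fin.last m) • w) ᵥ* A =
            u (Fin.last m) • (w ᵥ* E) := by
          rw [Matrix.sub_vecMul, Matrix.smul_vecMul, Matrix.smul_vecMul, huA, hwA]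
          simp
        rw [h] at hcalc
        have := congr_fun hcalc (Fin.last q)
        rw [hvE] at this
        simp at this
        tauto
      · simp [hul]; ring
      · intro j hj
        have hwA : w ᵥ* A = - (w ᵥ* E) := by
          have : w ᵥ* A = w ᵥ* (A + E) - w ᵥ* E := by
            rw [Matrix.vecMul_add]; abel
          rw [this, hwAE]; abel
        rw [Matrix.sub_vecMul, Matrix.smul_vecMul, Matrix.smul_vecMul, huA, hwA]
        simp [hvE, hj]
  -- now finish
  rw [rank_lt_iff']
  refine ⟨fun i => x i.castSucc, ?_, ?_⟩
  · intro h
    apply hx0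
    funext i
    rcases Fin.eq_castSucc_or_eq_last i with ⟨i', rfl⟩ | rfl
    · exact congr_fun h i'
    · exact hxl
  · funext j
    have key : (x ᵥ* A) j.castSucc = 0 := hxA _ (by
      intro h
      exact absurd (congrArg Fin.val h) (by simp [Fin.castSucc]; omega))
    simp only [Matrix.vecMul, dotProduct, Matrix.submatrix_apply] at key ⊢
    rw [Fin.sum_univ_castSucc] at key
    rw [hxl, zero_mul, add_zero] at key
    simpa using key

theorem extraction_lemma (F : Type*) [Field F] (n p : ℕ) (hn : 0 < n) (hnp : n ≤ p)
    (A : Matrix (Fin n) (Fin p) F)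
    (hA : A.rank < n)
    (hAE : (A + Matrix.single (⟨n - 1, by omega⟩ : Fin n)
        (⟨p - 1, by omega⟩ : Fin p) (1 : F)).rank < n) :
    (A.submatrix (Fin.castLE (n.sub_le 1)) (Fin.castLE (p.sub_le 1))).rank < n - 1 := by
  obtain ⟨m, rfl⟩ : ∃ m, n = m + 1 := ⟨n - 1, by omega⟩
  obtain ⟨q, rfl⟩ : ∃ q, p = q + 1 := ⟨p - 1, by omega⟩
  exact extraction_aux F m q A hA hAE
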